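/- Let S be a finite block group all of whose subgroups are trivial. Suppose there exist ideals A, B of S with B ⊊ A such that the Rees quotient A/B is isomorphic to the inverse Rees matrix semigroup M = M⁰({1},q,q;I_q) over the trivial group (identify A/B with M), an integer t > 1, nonzero elements y_i = (1;α_i,β_i) ∈ M (1 ≤ i ≤ t) with α₁,…,α_t pairwise distinct, and elements v₁, v₂ ∈ S such that Γ(v₁)(β_k) = α_k for all 1 ≤ k ≤ t, and for some integer 1 ≤ i < t, Γ(v₂)(β_k) = α_{k+i} for all 1 ≤ k ≤ t (subscripts k+i reduced modulo t into {1,…,t}), where Γ is the ℒ_M-representation of S/B. Then neither v₁ nor v₂ is a regular element of S. -/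

import Mathlib

namespace SMN

variable {S : Type*}

/-- Mal'cev sequences `(λ_n, ρ_n)`; `z k` plays the role of `z_{k+1}`. -/
def lr [Mul S] (x y : S) (z : ℕ → S) : ℕ → S × S
  | 0 => (x, y)
  | n + 1 =>
    let p := lr x y z n
    (p.1 * z n * p.2, p.2 * z n * p.1)

/-- Cyclic shift by `k` in `Fin t`. -/
def cyc {t : ℕ} (i : Fin t) (k : ℕ) : Fin t :=
  ⟨(i.val + k) % t, Nat.mod_lt _ i.pos⟩

/-- Strong Mal'cev sequences `λ_{n,i}`; `z k` plays the role of `z_{k+1}`. -/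
def slam [Mul S] {t : ℕ} (x : Fin t → S) (z : ℕ → S) : ℕ → Fin t → S
  | 0 => x
  | n + 1 =>
    let f := slam x z n
    fun i => (List.range (t - 1)).foldl (fun acc j => acc * z n * f (cyc i (j + 1))) (f i)

/-- A semigroup is Mal'cev nilpotent if for some `n ≥ 1`,
`λ_n = ρ_n` for all `x, y ∈ S` and `z₁, …, z_n ∈ S¹`. -/
def MalcevNilpotent (S : Type*) [Semigroup S] : Prop :=
  ∃ n : ℕ, 1 ≤ n ∧ ∀ (x y : S) (z : ℕ → WithOne S),
    (lr (x : WithOne S) (y : WithOne S) z n).1 = (lr (x : WithOne S) (y : WithOne S) z n).2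

/-- Strong Mal'cev nilpotency at level `n`. -/
def SMNAt (S : Type*) [Semigroup S] (n : ℕ) : Prop :=
  ∀ t : ℕ, 2 ≤ t → ∀ (x : Fin t → S) (z : ℕ → WithOne S) (i j : Fin t),
    slam (fun k => (x k : WithOne S)) z n i = slam (fun k => (x k : WithOne S)) z n j

/-- A semigroup is strongly Mal'cev nilpotent if for some `n ≥ 1`, for every `t ≥ 2`,
`λ_{n,1} = ⋯ = λ_{n,t}` for all `x₁, …, x_t ∈ S` and `z₁, …, z_n ∈ S¹`. -/
def StronglyMalcevNilpotent (S : Type*) [Semigroup S] : Prop :=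
  ∃ n : ℕ, 1 ≤ n ∧ SMNAt S n

/-- `y` is an inverse of `x`. -/
def IsInverseOf [Semigroup S] (y x : S) : Prop := x * y * x = x ∧ y * x * y = y

/-- A block group: every element has at most one inverse. -/
def BlockGroup (S : Type*) [Semigroup S] : Prop :=
  ∀ x y₁ y₂ : S, IsInverseOf y₁ x → IsInverseOf y₂ x → y₁ = y₂

/-- All subgroups (subsemigroups which are groups) of `S` are nilpotent. -/
def AllSubgroupsNilpotent (S : Type*) [Semigroup S] : Prop :=
  ∀ (G : Type) [Group G], ∀ φ : G → S,
    (∀ a b : G, φ (a * b) = φ a * φ b) → Function.Injective φ → Group.IsNilpotent G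

/-- All subgroups (subsemigroups which are groups) of `S` are trivial. -/
def AllSubgroupsTrivial (S : Type*) [Semigroup S] : Prop :=
  ∀ (G : Type) [Group G], ∀ φ : G → S,
    (∀ a b : G, φ (a * b) = φ a * φ b) → Function.Injective φ → ∀ g : G, g = 1

end SMN

namespace SMN

/-- Multiplication of the inverse Rees matrix semigroup `M⁰(G,q,q;I_q)`:
`(g;i,j)(g';i',j') = (gg';i,j')` if `j = i'`, and `θ` (= `none`) otherwise. -/
def reesMul {G : Type*} [Mul G] {q : ℕ} :
    Option (G × Fin q × Fin q) → Option (G × Fin q × Fin q) → Option (G × Fin q × Fin q)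
  | some (g, i, j), some (g', i', j') => if j = i' then some (g * g', i, j') else none
  | _, _ => none

/-- A (two-sided) ideal of a semigroup. -/
def IsIdeal {S : Type*} [Semigroup S] (A : Set S) : Prop :=
  A.Nonempty ∧ ∀ a ∈ A, ∀ s : S, s * a ∈ A ∧ a * s ∈ A

/-- `φ` identifies the Rees quotient `A/B` with the inverse Rees matrix semigroup
`M⁰(G,q,q;I_q)`: it sends exactly the complement of `A ∖ B` to the zero `θ = none`, is a
bijection from `A ∖ B` onto the nonzero elements, and is multiplicative on `A`. -/
def ReesIdent (S : Type*) [Semigroup S] (G : Type*) [Group G] (q : ℕ)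
    (A B : Set S) (φ : S → Option (G × Fin q × Fin q)) : Prop :=
  (∀ a : S, φ a = none ↔ a ∉ A \ B) ∧
  (∀ a ∈ A \ B, ∀ b ∈ A \ B, φ a = φ b → a = b) ∧
  (∀ m : G × Fin q × Fin q, ∃ a ∈ A \ B, φ a = some m) ∧
  (∀ a ∈ A, ∀ b ∈ A, φ (a * b) = reesMul (φ a) (φ b))

/-- `Γ(w)(j) = j'` for the `ℒ_M`-representation `Γ` of `S/B` under the identification `φ`:
right multiplication by `w` sends every nonzero `(g;i,j)` to some nonzero `(g';i,j')`. -/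
def GammaMaps {S : Type*} [Semigroup S] {G : Type*} [Group G] {q : ℕ}
    (φ : S → Option (G × Fin q × Fin q)) (w : S) (j j' : Fin q) : Prop :=
  ∀ (a : S) (g : G) (i : Fin q), φ a = some (g, i, j) →
    ∃ g' : G, φ (a * w) = some (g', i, j')


/-- An element `x` of a semigroup is regular. -/
def IsRegularElem {S : Type*} [Semigroup S] (x : S) : Prop := ∃ y : S, x * y * x = x


namespace SMNAux
open SMN

variable {S : Type*} [Semigroup S]


def pw (z : S) : ℕ → S
  | 0 => z
  | n + 1 => pw z n * z

lemma pw_succ (z : S) (n : ℕ) : pw z (n + 1) = pw z n * z := rfl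

lemma pw_add (z : S) (a b : ℕ) : pw z (a + b + 1) = pw z a * pw z b := by
  induction b with
  | zero => rfl
  | succ b ih =>
    rw [show a + (b + 1) + 1 = (a + b + 1) + 1 from by omega, pw_succ, ih, pw_succ, mul_assoc]

lemma pw_period' (z : S) {a d : ℕ} (h : pw z a = pw z (a + d)) (k : ℕ) :
    pw z (a + k) = pw z (a + k + d) := by
  induction k with
  | zero => simpa using h
  | succ k ih =>
    rw [show a + (k + 1) = (a + k) + 1 from by omega,
      show a + k + 1 + d = (a + k + d) + 1 from by omega, pw_succ, pw_succ, ih]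

lemma pw_period_mul (z : S) {a d : ℕ} (h : pw z a = pw z (a + d)) (k j : ℕ) :
    pw z (a + k) = pw z (a + k + j * d) := by
  induction j with
  | zero => simp
  | succ j ih =>
    have e := pw_period' z h (k + j * d)
    rw [show a + (k + j * d) = a + k + j * d by omega] at e
    rw [ih, e, Nat.succ_mul]
    congr 1
    omega

lemma pw_eq_of_le (z : S) {a d : ℕ} (h : pw z a = pw z (a + d)) {b c : ℕ}
    (hb : a ≤ b) (hbc : b ≤ c) (hmod : b % d = c % d) : pw z b = pw z c := by
  obtain ⟨j, hj⟩ := (Nat.modEq_iff_dvd' hbc).1 hmod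
  have e := pw_period_mul z h (b - a) j
  rw [show a + (b - a) = b by omega] at e
  have hjc : b + j * d = c := by rw [Nat.mul_comm]; omega
  rw [hjc] at e
  exact e

lemma pw_eq_of (z : S) {a d : ℕ} (h : pw z a = pw z (a + d)) {b c : ℕ}
    (hb : a ≤ b) (hc : a ≤ c) (hmod : b % d = c % d) : pw z b = pw z c := by
  rcases le_total b c with hle | hle
  · exact pw_eq_of_le z h hb hle hmod
  · exact (pw_eq_of_le z h hc hle hmod.symm).symm

lemma exists_aperiodic (S : Type*) [Semigroup S] [Finite S]
    (htriv : AllSubgroupsTrivial S) (z : S) : ∃ m : ℕ, pw z m = pw z (m + 1) := by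
  classical
  obtain ⟨a, b, hab, he⟩ := Finite.exists_ne_map_eq_of_infinite (pw z)
  have hPex : ∃ d : ℕ, 0 < d ∧ ∃ m, pw z m = pw z (m + d) := by
    rcases Nat.lt_or_ge a b with h | h
    · exact ⟨b - a, by omega, a, by rw [show a + (b - a) = b by omega]; exact he⟩
    · have hba : b < a := by omega
      exact ⟨a - b, by omega, b, by rw [show b + (a - b) = a by omega]; exact he.symm⟩
  set n := Nat.find hPex with hn
  obtain ⟨hn0, m, hm⟩ := Nat.find_spec hPex
  by_cases h1 : n = 1
  · exact ⟨m, by rw [← h1]; exact hm⟩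
  exfalso
  have hn2 : 2 ≤ n := by omega
  haveI : NeZero n := ⟨by omega⟩
  set M := n * (m + 1) with hM
  have hM2 : 2 * (m + 1) ≤ M := Nat.mul_le_mul_right _ hn2
  set N := M - 1 with hN
  have hNm : m ≤ N := by omega
  have hNd : n ∣ N + 1 := ⟨m + 1, by omega⟩
  set ψ : Multiplicative (ZMod n) → S := fun x => pw z (N + (Multiplicative.toAdd x).val) with hψ
  have hmulψ : ∀ x y, ψ (x * y) = ψ x * ψ y := by
    intro x y
    set xv := (Multiplicative.toAdd x).val
    set yv := (Multiplicative.toAdd y).val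
    have h1 : ψ x * ψ y = pw z ((N + xv) + (N + yv) + 1) := (pw_add z _ _).symm
    rw [h1]
    show pw z (N + (Multiplicative.toAdd (x * y)).val) = _
    have hval : (Multiplicative.toAdd (x * y)).val = (xv + yv) % n := by
      rw [toAdd_mul, ZMod.val_add]
    rw [hval]
    apply pw_eq_of z hm (by omega) (by omega)
    show (N + (xv + yv) % n) % n = _ % n
    have c1 : (N + (xv + yv) % n) ≡ N + (xv + yv) [MOD n] :=
      Nat.ModEq.add_left N (Nat.mod_modEq _ n)
    have c2 : (N + xv) + (N + yv) + 1 = (N + 1) + (N + (xv + yv)) := by omega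
    have c3 : (N + 1) + (N + (xv + yv)) ≡ 0 + (N + (xv + yv)) [MOD n] :=
      Nat.ModEq.add_right _ ((Nat.modEq_zero_iff_dvd).2 hNd)
    calc (N + (xv + yv) % n) % n = (N + (xv + yv)) % n := c1
      _ = ((N + 1) + (N + (xv + yv))) % n := by rw [← (c3.trans (by simp [Nat.ModEq]))]
      _ = ((N + xv) + (N + yv) + 1) % n := by rw [← c2]
  have hinjψ : Function.Injective ψ := by
    have haux : ∀ x y : Multiplicative (ZMod n),
        (Multiplicative.toAdd x).val < (Multiplicative.toAdd y).val → ψ x ≠ ψ y := by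
      intro x y hlt heq
      set xv := (Multiplicative.toAdd x).val
      set yv := (Multiplicative.toAdd y).val
      have hyn : yv < n := ZMod.val_lt _
      have hP : 0 < yv - xv ∧ ∃ m', pw z m' = pw z (m' + (yv - xv)) := by
        refine ⟨by omega, N + xv, ?_⟩
        rw [show N + xv + (yv - xv) = N + yv by omega]
        exact heq
      exact Nat.find_min hPex (show yv - xv < n by omega) hP
    intro x y heq
    rcases Nat.lt_trichotomy (Multiplicative.toAdd x).val (Multiplicative.toAdd y).val with
      h | h | h
    · exact absurd heq (haux x y h)
    · have := ZMod.val_injective n h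
      exact Multiplicative.toAdd.injective this
    · exact absurd heq.symm (haux y x h)
  have htr := htriv (Multiplicative (ZMod n)) ψ hmulψ hinjψ
  have e1 := htr (Multiplicative.ofAdd (1 : ZMod n))
  have e2 : (1 : ZMod n) = 0 := by
    have := congrArg Multiplicative.toAdd e1
    simpa using this
  haveI : Fact (1 < n) := ⟨by omega⟩
  have := congrArg ZMod.val e2
  rw [ZMod.val_one, ZMod.val_zero] at this
  omega

lemma keyZ {S : Type*} [Semigroup S] (hbg : BlockGroup S)
    {A B : Set S} (hA : IsIdeal A) (hB : IsIdeal B)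
    {q : ℕ} {φ : S → Option (Unit × Fin q × Fin q)} (hφ : ReesIdent S Unit q A B φ)
    {t : ℕ} (β γ γ' : Fin t → Fin q) (v v' : S)
    (hv : ∀ k, GammaMaps φ v (β k) (γ k)) (hv' : ∀ k, GammaMaps φ v' (β k) (γ' k))
    (hreg : IsRegularElem v) :
    ∃ z : S, ∀ (a : S) (r : Fin q) (k : Fin t),
      φ a = some ((), r, γ k) → φ (a * z) = some ((), r, γ' k) := by
  obtain ⟨hnone, hinj, hsurj, hmul⟩ := hφ
  obtain ⟨w, hw⟩ := hreg
  refine ⟨w * v', ?_⟩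
  intro a r k ha
  -- basic toolkit
  have mem : ∀ {x : S} {m : Unit × Fin q × Fin q}, φ x = some m → x ∈ A \ B := by
    intro x m h
    by_contra hc
    rw [(hnone x).mpr hc] at h
    cases h
  have eqOf : ∀ {x y : S} {m : Unit × Fin q × Fin q},
      φ x = some m → φ y = some m → x = y := by
    intro x y m hx hy
    exact hinj x (mem hx) y (mem hy) (hx.trans hy.symm)
  have mulE : ∀ {x y : S} {r₁ c₁ c₂ : Fin q}, φ x = some ((), r₁, c₁) →
      φ y = some ((), c₁, c₂) → φ (x * y) = some ((), r₁, c₂) := by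
    intro x y r₁ c₁ c₂ hx hy
    rw [hmul x (mem hx).1 y (mem hy).1, hx, hy]
    simp [reesMul]
  have gapp : ∀ (u : S) (cols : Fin t → Fin q), (∀ k, GammaMaps φ u (β k) (cols k)) →
      ∀ {x : S} {r₁ : Fin q} (k : Fin t), φ x = some ((), r₁, β k) →
      φ (x * u) = some ((), r₁, cols k) := by
    intro u cols hu x r₁ k hx
    obtain ⟨g', hg⟩ := hu k x () r₁ hx
    exact hg
  -- set up elements
  obtain ⟨c, -, hc⟩ := hsurj ((), γ k, β k)
  have hb : φ (a * c) = some ((), r, β k) := mulE ha hc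
  set b := a * c with hbdef
  have hbv : φ (b * v) = some ((), r, γ k) := gapp v γ hv k hb
  have hbva : b * v = a := eqOf hbv ha
  -- the element aw := b * (v * w)
  set aw := b * (v * w) with hawdef
  have haw_v : aw * v = a := by
    rw [hawdef, mul_assoc b (v * w) v]
    rw [show v * w * v = v from hw] at *
    · exact hbva
  -- memberships
  have hawA : aw ∈ A := (hA.2 b (mem hb).1 (v * w)).2
  have hawnB : aw ∉ B := by
    intro hmemB
    have : aw * v ∈ B := (hB.2 aw hmemB v).2
    rw [haw_v] at this
    exact (mem ha).2 this
  have hawsome : ∃ r₂ c₂ : Fin q, φ aw = some ((), r₂, c₂) := by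
    rcases hφaw : φ aw with _ | ⟨⟨⟩, r₂, c₂⟩
    · exact absurd ⟨hawA, hawnB⟩ ((hnone aw).1 hφaw)
    · exact ⟨r₂, c₂, rfl⟩
  obtain ⟨r₂, c₂, hawφ⟩ := hawsome
  -- auxiliary elements a', b', n
  obtain ⟨a', -, ha'⟩ := hsurj ((), γ k, r)
  obtain ⟨b', -, hb'⟩ := hsurj ((), β k, r)
  obtain ⟨nn, -, hnn⟩ := hsurj ((), c₂, r₂)
  -- small products
  have haa'b : (a * a') * b = b := eqOf (mulE (mulE ha ha') hb) hb
  have ha'bva' : ((a' * b) * v) * a' = a' :=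
    eqOf (mulE (gapp v γ hv k (mulE ha' hb)) ha') ha'
  have haa'a : (a * a') * a = a := eqOf (mulE (mulE ha ha') ha) ha
  -- b' is an inverse of b
  have hinvb' : IsInverseOf b' b :=
    ⟨eqOf (mulE (mulE hb hb') hb) hb, eqOf (mulE (mulE hb' hb) hb') hb'⟩
  -- X := v * a' is an inverse of b
  set X := v * a' with hXdef
  have hXb1 : b * X * b = b := by
    have e1 : b * X = a * a' := by rw [hXdef, ← mul_assoc, hbva]
    rw [e1, haa'b]
  have hXb2 : X * b * X = X := by
    have : X * b * X = v * (((a' * b) * v) * a') := by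
      rw [hXdef]; simp only [mul_assoc]
    rw [this, ha'bva']
  have hXeqb' : X = b' := hbg b X b' ⟨hXb1, hXb2⟩ hinvb'
  have hXφ : φ X = some ((), β k, r) := by rw [hXeqb']; exact hb'
  -- X is an inverse of aw; nn is an inverse of aw
  have hinvnn : IsInverseOf nn aw :=
    ⟨eqOf (mulE (mulE hawφ hnn) hawφ) hawφ, eqOf (mulE (mulE hnn hawφ) hnn) hnn⟩
  have hawX : aw * X = a * a' := by
    rw [hXdef, ← mul_assoc, haw_v]
  have hXaw1 : aw * X * aw = aw := by
    rw [hawX, hawdef, ← mul_assoc, haa'b]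
  have hXaw2 : X * aw * X = X := by
    have hwa : v * (w * (v * a')) = v * a' := by
      have : v * (w * (v * a')) = (v * w * v) * a' := by simp only [mul_assoc]
      rw [this, hw]
    have e2 : X * aw * X = v * (a' * (b * (v * (w * (v * a'))))) := by
      rw [hXdef, hawdef]; simp only [mul_assoc]
    rw [e2, hwa]
    have : v * (a' * (b * (v * a'))) = v * (((a' * b) * v) * a') := by
      simp only [mul_assoc]
    rw [this, ha'bva', hXdef]
  have hXeqnn : X = nn := hbg aw X nn ⟨hXaw1, hXaw2⟩ hinvnn
  -- conclude aw = b, i.e. b * (v * w) = b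
  have hnnφ : φ nn = some ((), β k, r) := by rw [← hXeqnn]; exact hXφ
  have hc2 : c₂ = β k ∧ r₂ = r := by
    rw [hnn] at hnnφ
    simpa using hnnφ
  have hawb : aw = b := by
    refine eqOf ?_ hb
    rw [hawφ, hc2.1, hc2.2]
  -- final computation
  have hfin : a * (w * v') = b * v' := by
    have e3 : a * (w * v') = (b * (v * w)) * v' := by
      rw [← hbva]; simp only [mul_assoc]
    rw [e3, ← hawdef, hawb]
  rw [hfin]
  exact gapp v' γ' hv' k hb


lemma cyc_cyc {t : ℕ} (j : Fin t) (a b : ℕ) : cyc (cyc j a) b = cyc j (a + b) := by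
  apply Fin.ext
  show ((j.val + a) % t + b) % t = (j.val + (a + b)) % t
  rw [Nat.mod_add_mod, Nat.add_assoc]

lemma cyc_t {t : ℕ} (j : Fin t) : cyc j t = j := by
  apply Fin.ext
  show (j.val + t) % t = j.val
  rw [Nat.add_mod_right, Nat.mod_eq_of_lt j.isLt]

lemma cyc_ne {t : ℕ} (m : ℕ) (h1 : 0 < m) (h2 : m < t) (k : Fin t) : cyc k m ≠ k := by
  intro h
  have h3 : (k.val + m) % t = k.val := congrArg Fin.val h
  have h4 : k.val < t := k.isLt
  rcases Nat.lt_or_ge (k.val + m) t with hlt | hge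
  · rw [Nat.mod_eq_of_lt hlt] at h3; omega
  · have h5 : (k.val + m) % t = (k.val + m - t) % t := Nat.mod_eq_sub_mod hge
    have h6 : k.val + m - t < t := by omega
    rw [h5, Nat.mod_eq_of_lt h6] at h3; omega

lemma noZ {S : Type*} [Semigroup S] [Finite S] (htriv : AllSubgroupsTrivial S)
    {A B : Set S} {q : ℕ} {φ : S → Option (Unit × Fin q × Fin q)}
    (hφ : ReesIdent S Unit q A B φ)
    {t : ℕ} (ht : 0 < t) (α : Fin t → Fin q) (hα : Function.Injective α)
    (σ : Fin t → Fin t) (hσ : ∀ k, σ k ≠ k) (z : S)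
    (hz : ∀ (a : S) (r : Fin q) (k : Fin t), φ a = some ((), r, α k) →
      φ (a * z) = some ((), r, α (σ k))) : False := by
  obtain ⟨m, hm⟩ := exists_aperiodic S htriv z
  set k₀ : Fin t := ⟨0, ht⟩
  obtain ⟨a₀, -, ha₀⟩ := hφ.2.2.1 ((), α k₀, α k₀)
  have key : ∀ n, φ (a₀ * pw z n) = some ((), α k₀, α (σ^[n + 1] k₀)) := by
    intro n
    induction n with
    | zero =>
      have := hz a₀ (α k₀) k₀ ha₀
      simpa [pw] using this
    | succ n ih =>
      have hstep : a₀ * pw z (n + 1) = (a₀ * pw z n) * z := by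
        rw [pw_succ, mul_assoc]
      rw [hstep]
      have := hz (a₀ * pw z n) (α k₀) (σ^[n + 1] k₀) ih
      rw [Function.iterate_succ_apply']
      exact this
  have h1 := key m
  rw [hm] at h1
  have h2 := key (m + 1)
  have h3 : α (σ^[m + 1] k₀) = α (σ^[m + 1 + 1] k₀) := by
    have := h1.symm.trans h2
    simpa using this
  have h4 := hα h3
  have h5 : σ^[m + 1 + 1] k₀ = σ (σ^[m + 1] k₀) := Function.iterate_succ_apply' σ (m + 1) k₀
  exact hσ (σ^[m + 1] k₀) (h4.trans h5).symm

end SMNAux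

open SMNAux in
/-- In a finite block group all of whose subgroups are trivial, given an ideal section
`A/B ≅ M⁰({1},q,q;I_q)` (trivial group, realized as `Unit`), nonzero elements
`y_i = (1;α_i,β_i)` with pairwise distinct `α_i`, and elements `v₁, v₂` acting on the
`ℒ`-classes by `Γ(v₁)(β_k) = α_k` and `Γ(v₂)(β_k) = α_{k+i}` for some `1 ≤ i < t`,
neither `v₁` nor `v₂` is regular. -/
theorem stmt15 (S : Type*) [Semigroup S] [Finite S]
    (hbg : BlockGroup S) (htriv : AllSubgroupsTrivial S)
    (A B : Set S) (hA : IsIdeal A) (hB : IsIdeal B) (hBA : B ⊂ A)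
    (q : ℕ) (φ : S → Option (Unit × Fin q × Fin q))
    (hφ : ReesIdent S Unit q A B φ)
    (t : ℕ) (ht : 1 < t)
    (y : Fin t → S) (α β : Fin t → Fin q)
    (hy : ∀ k : Fin t, φ (y k) = some ((), α k, β k))
    (hα : Function.Injective α)
    (v₁ v₂ : S)
    (hv₁ : ∀ k : Fin t, GammaMaps φ v₁ (β k) (α k))
    (hv₂ : ∃ i : ℕ, 1 ≤ i ∧ i < t ∧ ∀ k : Fin t, GammaMaps φ v₂ (β k) (α (cyc k i))) :
    ¬ IsRegularElem v₁ ∧ ¬ IsRegularElem v₂ := by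
  obtain ⟨i, hi1, hi2, hv₂'⟩ := hv₂
  constructor
  · intro hreg
    obtain ⟨z, hzprop⟩ :=
      keyZ hbg hA hB hφ β α (fun k => α (cyc k i)) v₁ v₂ hv₁ hv₂' hreg
    exact noZ htriv hφ (by omega : 0 < t) α hα (fun k => cyc k i)
      (fun k => cyc_ne i hi1 hi2 k) z hzprop
  · intro hreg
    obtain ⟨z, hzprop⟩ :=
      keyZ hbg hA hB hφ β (fun k => α (cyc k i)) α v₂ v₁ hv₂' hv₁ hreg
    refine noZ htriv hφ (by omega : 0 < t) α hα (fun j => cyc j (t - i))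
      (fun j => cyc_ne (t - i) (by omega) (by omega) j) z ?_
    intro a r j h
    have hcc : cyc (cyc j (t - i)) i = j := by
      rw [cyc_cyc, show t - i + i = t by omega, cyc_t]
    have h' : φ a = some ((), r, α (cyc (cyc j (t - i)) i)) := by rw [hcc]; exact h
    exact hzprop a r (cyc j (t - i)) h'


end SMN
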